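/- arXiv:2501.03003 — 3 statements merged into one kernel-verified Lean document; each statement's English description precedes it below -/
import Mathlib

section
/- Let G be a primitive soluble permutation group on a finite set Δ of size n ≥ 2. Then I(G) ≤ log₂(n) + 1. -/
/-- The pointwise stabiliser, inside the subgroup `H`, of a list of points. -/
def ptStab {G : Type*} [Group G] {Δ : Type*} [MulAction G Δ] (H : Subgroup G)
    (l : List Δ) : Subgroup G :=
  H ⊓ ⨅ δ ∈ l, MulAction.stabilizer G δ

/-- `l` is an irredundant base for the subgroup `H` acting on `Δ`: the pointwise
stabilisers of its prefixes are strictly decreasing, starting from `H` and ending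
with the trivial group. -/
def IsIrredundantBase {G : Type*} [Group G] {Δ : Type*} [MulAction G Δ] (H : Subgroup G)
    (l : List Δ) : Prop :=
  (∀ i < l.length, ptStab H (l.take (i + 1)) < ptStab H (l.take i)) ∧ ptStab H l = ⊥

/-- `I(H)`: the maximum length of an irredundant base for the subgroup `H` acting on `Δ`. -/
noncomputable def maxIrr {G : Type*} [Group G] (H : Subgroup G) (Δ : Type*) [MulAction G Δ] : ℕ :=
  sSup {k | ∃ l : List Δ, IsIrredundantBase H l ∧ l.length = k}

/-- A permutation group `G ≤ Sym(Δ)` is primitive if it is transitive and all of its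
blocks are trivial. -/
def IsPrimitiveSubgroup {Δ : Type*} (G : Subgroup (Equiv.Perm Δ)) : Prop :=
  MulAction.IsPretransitive G Δ ∧
    ∀ B : Set Δ, MulAction.IsBlock G B → B.Subsingleton ∨ B = Set.univ

lemma mem_ptStab {G : Type*} [Group G] {Δ : Type*} [MulAction G Δ] {H : Subgroup G}
    {l : List Δ} {g : G} : g ∈ ptStab H l ↔ g ∈ H ∧ ∀ δ ∈ l, g • δ = δ := by
  simp [ptStab, Subgroup.mem_iInf, MulAction.mem_stabilizer_iff]

open scoped commutatorElement in
lemma exists_abelian_normal {Δ : Type*} [Fintype Δ] (hn : 2 ≤ Fintype.card Δ)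
    (G : Subgroup (Equiv.Perm Δ)) (hsol : IsSolvable G) (hprim : IsPrimitiveSubgroup G) :
    ∃ A : Subgroup (Equiv.Perm Δ), A ≤ G ∧
      (∀ a ∈ A, ∀ b ∈ A, a * b = b * a) ∧
      (∀ g ∈ G, ∀ a ∈ A, g * a * g⁻¹ ∈ A) ∧
      (∀ x y : Δ, ∃ a ∈ A, a • x = y) := by
  classical
  have hGnt : Nontrivial G := by
    obtain ⟨x, y, hxy⟩ := Fintype.exists_pair_of_one_lt_card (α := Δ) (by omega)
    haveI := hprim.1
    obtain ⟨g, hg⟩ := MulAction.exists_smul_eq G x y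
    refine ⟨g, 1, fun h => hxy ?_⟩
    rw [h, one_smul] at hg; exact hg
  obtain ⟨m, hm⟩ := hsol.solvable
  have hex : ∃ n, derivedSeries G n = ⊥ := ⟨m, hm⟩
  have hspec := Nat.find_spec hex
  set m₀ := Nat.find hex with hm₀
  have hm₀pos : m₀ ≠ 0 := by
    intro h
    rw [h, derivedSeries_zero] at hspec
    exact top_ne_bot hspec
  set A₀ : Subgroup G := derivedSeries G (m₀ - 1) with hA₀def
  have hA₀ne : A₀ ≠ ⊥ := Nat.find_min hex (by omega)
  have hA₀comm : ∀ a b : G, a ∈ A₀ → b ∈ A₀ → a * b = b * a := by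
    intro a b ha hb
    have hc : ⁅a, b⁆ ∈ derivedSeries G m₀ := by
      have h1 : m₀ = (m₀ - 1) + 1 := by omega
      rw [h1, derivedSeries_succ]
      exact Subgroup.commutator_mem_commutator ha hb
    rw [hspec, Subgroup.mem_bot] at hc
    exact (commutatorElement_eq_one_iff_commute.mp hc).eq
  haveI hA₀norm : A₀.Normal := derivedSeries_normal G _
  -- transitivity of A₀ on Δ
  have htrans : ∀ x y : Δ, ∃ a : A₀, ((a : G) : Equiv.Perm Δ) • x = y := by
    by_cases hfix : ∀ δ : Δ, (MulAction.orbit A₀ δ).Subsingleton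
    · exfalso
      apply hA₀ne
      rw [Subgroup.eq_bot_iff_forall]
      intro a ha
      have haction : ∀ δ : Δ, ((a : G) : Equiv.Perm Δ) δ = δ := by
        intro δ
        have h1 : (⟨a, ha⟩ : A₀) • δ ∈ MulAction.orbit A₀ δ := MulAction.mem_orbit _ _
        have h2 : δ ∈ MulAction.orbit A₀ δ := MulAction.mem_orbit_self _
        have := hfix δ h1 h2
        exact this
      exact Subtype.ext (Equiv.Perm.ext haction)
    · push_neg at hfix
      obtain ⟨δ₀, hδ₀⟩ := hfix
      have hblock := MulAction.IsBlock.orbit_of_normal (G := G) (N := A₀) δ₀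
      rcases hprim.2 _ hblock with h | h
      · exact absurd h (Set.not_subsingleton_iff.mpr hδ₀)
      · intro x y
        have hx : x ∈ MulAction.orbit A₀ δ₀ := h ▸ Set.mem_univ x
        have hy : y ∈ MulAction.orbit A₀ δ₀ := h ▸ Set.mem_univ y
        obtain ⟨ax, hax⟩ := hx
        obtain ⟨ay, hay⟩ := hy
        refine ⟨ay * ax⁻¹, ?_⟩
        have : (ay * ax⁻¹) • x = y := by
          rw [← hax, ← hay, smul_smul]
          congr 1
          group
        exact this
  refine ⟨A₀.map G.subtype, Subgroup.map_subtype_le A₀, ?_, ?_, ?_⟩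
  · rintro a ⟨a', ha', rfl⟩ b ⟨b', hb', rfl⟩
    simp only [← map_mul]
    exact congrArg _ (hA₀comm a' b' ha' hb')
  · rintro g hg a ⟨a', ha', rfl⟩
    exact ⟨(⟨g, hg⟩ : G) * a' * (⟨g, hg⟩ : G)⁻¹, hA₀norm.conj_mem a' ha' _, rfl⟩
  · intro x y
    obtain ⟨a, ha⟩ := htrans x y
    exact ⟨((a : G) : Equiv.Perm Δ), ⟨a, a.2, rfl⟩, ha⟩

lemma key_count {Δ : Type*} [Fintype Δ] (hn : 2 ≤ Fintype.card Δ)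
    (G : Subgroup (Equiv.Perm Δ))
    (A : Subgroup (Equiv.Perm Δ)) (hAG : A ≤ G)
    (hAcomm : ∀ a ∈ A, ∀ b ∈ A, a * b = b * a)
    (hAnorm : ∀ g ∈ G, ∀ a ∈ A, g * a * g⁻¹ ∈ A)
    (hAtrans : ∀ x y : Δ, ∃ a ∈ A, a • x = y)
    {l : List Δ} (hl : IsIrredundantBase G l) :
    l.length ≠ 0 ∧ 2 ^ (l.length - 1) ≤ Fintype.card Δ := by
  classical
  haveI : Nonempty Δ := Fintype.card_pos_iff.mp (by omega)
  -- regularity of A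
  have hreg : ∀ a ∈ A, ∀ δ : Δ, a • δ = δ → a = 1 := by
    intro a ha δ hδ
    apply Equiv.Perm.ext
    intro x
    obtain ⟨b, hb, hbx⟩ := hAtrans δ x
    have : (a * b) • δ = x := by
      rw [hAcomm a ha b hb, mul_smul, hδ, hbx]
    calc a x = (a * b) • δ := by rw [mul_smul, hbx]; rfl
    _ = x := this
  -- G is nontrivial, so l ≠ []
  have hk0 : l.length ≠ 0 := by
    intro h
    rw [List.length_eq_zero_iff] at h
    have hbot : ptStab G ([] : List Δ) = ⊥ := h ▸ hl.2
    obtain ⟨x, y, hxy⟩ := Fintype.exists_pair_of_one_lt_card (α := Δ) (by omega)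
    obtain ⟨a, ha, hax⟩ := hAtrans x y
    have ha1 : a ≠ 1 := by rintro rfl; exact hxy (by simpa using hax)
    have hmem : a ∈ ptStab G ([] : List Δ) := mem_ptStab.mpr ⟨hAG ha, by simp⟩
    rw [hbot, Subgroup.mem_bot] at hmem
    exact ha1 hmem
  set k := l.length with hkdef
  have hk1 : 1 ≤ k := by omega
  set d : Δ := Classical.arbitrary Δ with hd
  set pt : ℕ → Δ := fun j => l.getD j d with hpt
  have hptmem : ∀ {j i : ℕ}, j < i → i ≤ k → pt j ∈ l.take i := by
    intro j i hji hik
    have hjk : j < k := by omega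
    have h1 : pt j = l[j] := List.getD_eq_getElem l d hjk
    have h2 : j < (l.take i).length := by simp [hkdef.symm ▸ hjk]; omega
    have h3 : (l.take i)[j] = l[j] := List.getElem_take
    rw [h1, ← h3]
    exact List.getElem_mem h2
  choose a haA hapt using fun j => hAtrans (pt 0) (pt j)
  set B : ℕ → Subgroup (Equiv.Perm Δ) := fun i => Subgroup.closure (a '' Set.Ico 1 i) with hB
  have hBA : ∀ i, B i ≤ A := by
    intro i
    rw [hB]
    apply (Subgroup.closure_le _).mpr
    rintro p ⟨j, _, rfl⟩
    exact haA j
  -- strictness: a i ∉ B i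
  have hnotmem : ∀ i, 1 ≤ i → i < k → a i ∉ B i := by
    intro i hi1 hik hmem
    have hlt := hl.1 i hik
    have hle : ptStab G (l.take i) ≤ ptStab G (l.take (i + 1)) := by
      intro g hg
      rw [mem_ptStab] at hg ⊢
      obtain ⟨hgG, hgfix⟩ := hg
      have hfix : ∀ j < i, g • pt j = pt j := fun j hj =>
        hgfix _ (hptmem hj (le_of_lt hik))
      have hg0 : g • pt 0 = pt 0 := hfix 0 (by omega)
      have hginv0 : g⁻¹ • pt 0 = pt 0 := inv_smul_eq_iff.mpr hg0.symm
      have hcent : ∀ p ∈ a '' Set.Ico 1 i, p ∈ Subgroup.centralizer {g} := by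
        rintro p ⟨j, hj, rfl⟩
        rw [Set.mem_Ico] at hj
        rw [Subgroup.mem_centralizer_iff]
        intro h' hh'
        rw [Set.mem_singleton_iff] at hh'
        rw [hh']
        have hbA : g * a j * g⁻¹ ∈ A := hAnorm g hgG _ (haA j)
        have hb0 : (g * a j * g⁻¹) • pt 0 = pt j := by
          rw [mul_smul, mul_smul, hginv0, hapt j, hfix j hj.2]
        have hc : (a j)⁻¹ * (g * a j * g⁻¹) ∈ A :=
          A.mul_mem (A.inv_mem (haA j)) hbA
        have hcfix : ((a j)⁻¹ * (g * a j * g⁻¹)) • pt 0 = pt 0 := by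
          rw [mul_smul, hb0, inv_smul_eq_iff, hapt j]
        have := hreg _ hc _ hcfix
        have hbe : g * a j * g⁻¹ = a j := by
          have := inv_mul_eq_one.mp this
          exact this.symm
        calc g * a j = (g * a j * g⁻¹) * g := by group
        _ = a j * g := by rw [hbe]
      have hBcent : B i ≤ Subgroup.centralizer {g} := (Subgroup.closure_le _).mpr hcent
      have hcomm : g * a i = a i * g :=
        Subgroup.mem_centralizer_iff.mp (hBcent hmem) g (Set.mem_singleton g)
      refine ⟨hgG, fun δ hδ => ?_⟩
      rw [List.take_succ, List.mem_append] at hδ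
      rcases hδ with hδ | hδ
      · exact hgfix δ hδ
      · have hik' : i < l.length := hik
        rw [List.getElem?_eq_getElem hik'] at hδ
        simp only [Option.toList_some, List.mem_singleton] at hδ
        subst hδ
        have hpti : pt i = l[i] := List.getD_eq_getElem l d hik'
        rw [← hpti, ← hapt i, ← mul_smul, hcomm, mul_smul, hg0]
    exact absurd (lt_of_lt_of_le hlt hle) (lt_irrefl _)
  -- chain is strictly increasing
  have hchain : ∀ i, 1 ≤ i → i < k → B i < B (i + 1) := by
    intro i hi1 hik
    refine SetLike.lt_iff_le_and_exists.mpr ⟨?_, a i, ?_, hnotmem i hi1 hik⟩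
    · exact Subgroup.closure_mono (Set.image_mono (Set.Ico_subset_Ico_right (by omega)))
    · exact Subgroup.subset_closure ⟨i, Set.mem_Ico.mpr ⟨hi1, by omega⟩, rfl⟩
  -- cardinality bound by induction
  haveI : ∀ i, Finite (B i) := fun i => inferInstance
  have hcard : ∀ i, 1 ≤ i → i ≤ k → 2 ^ (i - 1) ≤ Nat.card (B i) := by
    intro i hi1
    induction i, hi1 using Nat.le_induction with
    | base => intro _; simp only [Nat.sub_self, pow_zero]; exact Nat.card_pos
    | succ i hi ih =>
      intro hik
      have h1 : 1 ≤ i := hi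
      have hik' : i < k := by omega
      have hlt := hchain i h1 hik'
      have hdvd : Nat.card (B i) ∣ Nat.card (B (i + 1)) :=
        Subgroup.card_dvd_of_le (le_of_lt hlt)
      have hcl : Nat.card (B i) < Nat.card (B (i + 1)) := by
        have hss : (B i : Set (Equiv.Perm Δ)) ⊂ (B (i + 1) : Set (Equiv.Perm Δ)) :=
          SetLike.coe_ssubset_coe.mpr hlt
        have := Set.ncard_lt_ncard hss (Set.toFinite _)
        rwa [← Nat.card_coe_set_eq, ← Nat.card_coe_set_eq] at this
      obtain ⟨t, ht⟩ := hdvd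
      have hpos : 0 < Nat.card (B i) := Nat.card_pos
      have ht2 : 2 ≤ t := by
        rcases Nat.lt_or_ge t 2 with h | h
        · interval_cases t <;> omega
        · exact h
      have : 2 ^ i ≤ Nat.card (B (i + 1)) := by
        have h2 : 2 ^ i = 2 ^ (i - 1) * 2 := by
          rw [← pow_succ]; congr 1; omega
        calc 2 ^ i = 2 ^ (i - 1) * 2 := h2
        _ ≤ Nat.card (B i) * t := Nat.mul_le_mul (ih (by omega)) ht2
        _ = Nat.card (B (i + 1)) := ht.symm
      simpa using this
  -- |A| = |Δ|
  have hAcard : Nat.card A = Fintype.card Δ := by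
    have hbij : Function.Bijective (fun x : A => (x : Equiv.Perm Δ) • d) := by
      constructor
      · intro x y hxy
        simp only at hxy
        have h1 : ((x : Equiv.Perm Δ)⁻¹ * (y : Equiv.Perm Δ)) • d = d := by
          rw [mul_smul, ← hxy, inv_smul_smul]
        have h2 := hreg _ (A.mul_mem (A.inv_mem x.2) y.2) _ h1
        exact Subtype.ext (inv_mul_eq_one.mp h2)
      · intro y
        obtain ⟨p, hp, hpy⟩ := hAtrans d y
        exact ⟨⟨p, hp⟩, hpy⟩
    rw [Nat.card_eq_of_bijective _ hbij, Nat.card_eq_fintype_card]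
  refine ⟨hk0, ?_⟩
  have hBk : Nat.card (B k) ≤ Nat.card A :=
    Nat.le_of_dvd (by rw [hAcard]; omega) (Subgroup.card_dvd_of_le (hBA k))
  calc 2 ^ (k - 1) ≤ Nat.card (B k) := hcard k hk1 le_rfl
  _ ≤ Nat.card A := hBk
  _ = Fintype.card Δ := hAcard

/-- Corollary (first claim): a primitive soluble permutation group of degree `n` satisfies
`I(G) ≤ log₂ n + 1`. -/
theorem maxIrr_le_log_of_primitive_solvable (Δ : Type*) [Fintype Δ] (hn : 2 ≤ Fintype.card Δ)
    (G : Subgroup (Equiv.Perm Δ)) (hsol : IsSolvable G) (hprim : IsPrimitiveSubgroup G) :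
    (maxIrr G Δ : ℝ) ≤ Real.logb 2 (Fintype.card Δ) + 1 := by
  obtain ⟨A, hAG, hAcomm, hAnorm, hAtrans⟩ := exists_abelian_normal hn G hsol hprim
  have hbound : maxIrr G Δ ≤ Nat.log 2 (Fintype.card Δ) + 1 := by
    apply csSup_le'
    rintro k ⟨l, hl, rfl⟩
    obtain ⟨hk0, hk⟩ := key_count hn G A hAG hAcomm hAnorm hAtrans hl
    have := (Nat.le_log_iff_pow_le one_lt_two (by omega)).mpr hk
    omega
  have hlog : (Nat.log 2 (Fintype.card Δ) : ℝ) ≤ Real.logb 2 (Fintype.card Δ) := by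
    rw [Real.le_logb_iff_rpow_le one_lt_two (by exact_mod_cast (by omega : 0 < Fintype.card Δ))]
    rw [Real.rpow_natCast]
    exact_mod_cast Nat.pow_log_le_self 2 (by omega)
  calc (maxIrr G Δ : ℝ) ≤ (Nat.log 2 (Fintype.card Δ) : ℝ) + 1 := by exact_mod_cast hbound
  _ ≤ Real.logb 2 (Fintype.card Δ) + 1 := by linarith
end

section
/- For infinitely many integers n there exists a primitive soluble permutation group G on a set of size n with I(G) ≥ 0.63·log₂(n) + 1. (Concretely, for every d ≥ 1 one may take n = 3^d.) -/
set_option synthInstance.maxHeartbeats 1000000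
set_option maxHeartbeats 1000000

namespace MG

open Pointwise

variable {d : ℕ}

/-- The point set: vectors of length `d` over `𝔽₃`. -/
abbrev Pt (d : ℕ) := ZMod d → ZMod 3

lemma units_ne_zero : ∀ u : (ZMod 3)ˣ, (u : ZMod 3) ≠ 0 := by decide

/-- The affine monomial permutation `x ↦ fun i => ε i * x (i + k) + b i`. -/
def mperm (ε : ZMod d → (ZMod 3)ˣ) (k : ZMod d) (b : Pt d) : Equiv.Perm (Pt d) where
  toFun x := fun i => (ε i : ZMod 3) * x (i + k) + b i
  invFun y := fun j => ((ε (j - k))⁻¹ : (ZMod 3)ˣ) * (y (j - k) - b (j - k))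
  left_inv x := by
    funext j
    show ((ε (j - k))⁻¹ : (ZMod 3)ˣ) * ((ε (j - k) : ZMod 3) * x (j - k + k) + b (j - k) - b (j - k)) = x j
    rw [add_sub_cancel_right, sub_add_cancel, Units.inv_mul_cancel_left]
  right_inv y := by
    funext i
    show (ε i : ZMod 3) * (((ε (i + k - k))⁻¹ : (ZMod 3)ˣ) * (y (i + k - k) - b (i + k - k))) + b i = y i
    rw [add_sub_cancel_right, Units.mul_inv_cancel_left, sub_add_cancel]

@[simp] lemma mperm_apply (ε : ZMod d → (ZMod 3)ˣ) (k : ZMod d) (b : Pt d) (x : Pt d) :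
    mperm ε k b x = fun i => (ε i : ZMod 3) * x (i + k) + b i := rfl

lemma mperm_mul (ε' ε : ZMod d → (ZMod 3)ˣ) (k' k : ZMod d) (b' b : Pt d) :
    mperm ε' k' b' * mperm ε k b =
      mperm (fun i => ε' i * ε (i + k')) (k + k')
        (fun i => (ε' i : ZMod 3) * b (i + k') + b' i) := by
  apply Equiv.ext
  intro x
  funext i
  have h : i + k' + k = i + (k + k') := by ring
  simp only [Equiv.Perm.mul_apply, mperm_apply, Units.val_mul, h]
  ring

lemma mperm_one : mperm (d := d) 1 0 0 = 1 := by
  apply Equiv.ext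
  intro x
  funext i
  simp

/-- The abstract group of triples `(ε, k, b)`. -/
@[ext] structure W (d : ℕ) where
  eps : ZMod d → (ZMod 3)ˣ
  sh : ZMod d
  tr : Pt d

instance : Mul (W d) :=
  ⟨fun a b => ⟨fun i => a.eps i * b.eps (i + a.sh), b.sh + a.sh,
    fun i => (a.eps i : ZMod 3) * b.tr (i + a.sh) + a.tr i⟩⟩

instance : One (W d) := ⟨⟨1, 0, 0⟩⟩

instance : Inv (W d) :=
  ⟨fun a => ⟨fun j => (a.eps (j - a.sh))⁻¹, -a.sh,
    fun j => -(((a.eps (j - a.sh))⁻¹ : (ZMod 3)ˣ) * a.tr (j - a.sh))⟩⟩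

@[simp] lemma mul_eps (a b : W d) : (a * b).eps = fun i => a.eps i * b.eps (i + a.sh) := rfl
@[simp] lemma mul_sh (a b : W d) : (a * b).sh = b.sh + a.sh := rfl
@[simp] lemma mul_tr (a b : W d) :
    (a * b).tr = fun i => (a.eps i : ZMod 3) * b.tr (i + a.sh) + a.tr i := rfl
@[simp] lemma one_eps : (1 : W d).eps = 1 := rfl
@[simp] lemma one_sh : (1 : W d).sh = 0 := rfl
@[simp] lemma one_tr : (1 : W d).tr = 0 := rfl
@[simp] lemma inv_eps (a : W d) : (a⁻¹).eps = fun j => (a.eps (j - a.sh))⁻¹ := rfl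
@[simp] lemma inv_sh (a : W d) : (a⁻¹).sh = -a.sh := rfl
@[simp] lemma inv_tr (a : W d) :
    (a⁻¹).tr = fun j => -(((a.eps (j - a.sh))⁻¹ : (ZMod 3)ˣ) * a.tr (j - a.sh)) := rfl

instance : Group (W d) := by
  apply Group.ofLeftAxioms
  · intro a b c
    have h : ∀ i : ZMod d, i + (b.sh + a.sh) = i + a.sh + b.sh := fun i => by ring
    ext i
    · simp only [mul_eps, mul_sh, Units.val_mul, h, mul_assoc]
    · simp only [mul_sh]
      ring
    · simp only [mul_tr, mul_eps, mul_sh, Units.val_mul, h]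
      push_cast
      ring
  · intro a
    ext i
    · simp only [mul_eps, one_eps, one_sh, Pi.one_apply, one_mul, add_zero]
    · simp only [mul_sh, one_sh, add_zero]
    · simp only [mul_tr, one_eps, one_sh, Pi.one_apply, Units.val_one, one_mul, add_zero,
        one_tr, Pi.zero_apply]
  · intro a
    have h : ∀ i : ZMod d, i + -a.sh = i - a.sh := fun i => (sub_eq_add_neg i a.sh).symm
    ext i
    · simp only [mul_eps, inv_eps, inv_sh, h, one_eps, Pi.one_apply, inv_mul_cancel]
    · simp only [mul_sh, inv_sh, one_sh]
      ring
    · simp only [mul_tr, inv_eps, inv_sh, inv_tr, h, one_tr, Pi.zero_apply]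
      ring

/-- The representation of `W d` as permutations. -/
def rho : W d →* Equiv.Perm (Pt d) where
  toFun w := mperm w.eps w.sh w.tr
  map_one' := mperm_one
  map_mul' a b := by
    rw [mperm_mul]
    rfl

/-- The affine monomial group: our primitive soluble group. -/
def Gd (d : ℕ) : Subgroup (Equiv.Perm (Pt d)) := (rho (d := d)).range

lemma mem_Gd {π : Equiv.Perm (Pt d)} :
    π ∈ Gd d ↔ ∃ ε k b, mperm ε k b = π := by
  constructor
  · rintro ⟨w, rfl⟩
    exact ⟨w.eps, w.sh, w.tr, rfl⟩
  · rintro ⟨ε, k, b, rfl⟩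
    exact ⟨⟨ε, k, b⟩, rfl⟩

lemma mperm_mem (ε : ZMod d → (ZMod 3)ˣ) (k : ZMod d) (b : Pt d) :
    mperm ε k b ∈ Gd d := mem_Gd.mpr ⟨ε, k, b, rfl⟩

/-! ### Solvability -/

/-- Projection to the shift component. -/
def pk : W d →* Multiplicative (ZMod d) where
  toFun w := Multiplicative.ofAdd w.sh
  map_one' := rfl
  map_mul' a b := by
    show Multiplicative.ofAdd (b.sh + a.sh) = Multiplicative.ofAdd a.sh * Multiplicative.ofAdd b.sh
    rw [← ofAdd_add, add_comm]

lemma mem_pk_ker {w : W d} (h : w ∈ (pk (d := d)).ker) : w.sh = 0 := by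
  have h' : Multiplicative.ofAdd w.sh = (1 : Multiplicative (ZMod d)) := h
  exact ofAdd_eq_one.mp h'

/-- On the kernel of `pk`, projection to the sign component. -/
def pe : (pk (d := d)).ker →* (ZMod d → (ZMod 3)ˣ) where
  toFun w := w.1.eps
  map_one' := rfl
  map_mul' a b := by
    have ha : a.1.sh = 0 := mem_pk_ker a.2
    funext i
    show a.1.eps i * b.1.eps (i + a.1.sh) = a.1.eps i * b.1.eps i
    rw [ha, add_zero]

instance : Group.IsSolvable (W d) := by
  have h1 : Group.IsSolvable (pe (d := d)).ker := by
    apply isSolvable_of_comm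
    intro a b
    have haε : a.1.1.eps = 1 := a.2
    have hbε : b.1.1.eps = 1 := b.2
    have hak : a.1.1.sh = 0 := mem_pk_ker a.1.2
    have hbk : b.1.1.sh = 0 := mem_pk_ker b.1.2
    apply Subtype.ext; apply Subtype.ext
    show a.1.1 * b.1.1 = b.1.1 * a.1.1
    ext i
    · simp only [mul_eps, haε, hbε, Pi.one_apply, one_mul, mul_one]
    · simp only [mul_sh, hak, hbk]
    · simp only [mul_tr, haε, hbε, hak, hbk, Pi.one_apply, Units.val_one, one_mul, add_zero]
      ring
  have h2 : Group.IsSolvable (pk (d := d)).ker := by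
    exact solvable_of_ker_le_range (pe (d := d)).ker.subtype pe
      (by rw [Subgroup.range_subtype])
  exact solvable_of_ker_le_range (pk (d := d)).ker.subtype pk
    (by rw [Subgroup.range_subtype])

instance : Group.IsSolvable (Gd d) :=
  solvable_of_surjective (rho (d := d)).rangeRestrict_surjective

/-! ### Basis vectors -/

/-- The `j`-th standard basis vector. -/
def bv (j : ZMod d) : Pt d := fun i => if i = j then 1 else 0

@[simp] lemma bv_self (j : ZMod d) : bv j j = 1 := by simp [bv]

lemma fix_zero_iff (ε : ZMod d → (ZMod 3)ˣ) (k : ZMod d) (b : Pt d) :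
    mperm ε k b 0 = 0 ↔ b = 0 := by
  constructor
  · intro h
    funext i
    have := congrFun h i
    simpa using this
  · rintro rfl
    funext i
    simp

lemma fix_bv_iff (ε : ZMod d → (ZMod 3)ˣ) (k : ZMod d) (j : ZMod d) :
    mperm ε k 0 (bv j) = bv j ↔ k = 0 ∧ ε j = 1 := by
  constructor
  · intro h
    have hk : k = 0 := by
      by_contra hk
      have := congrFun h (j - k)
      simp only [mperm_apply, Pi.zero_apply, add_zero, sub_add_cancel, bv_self] at this
      rw [mul_one] at this
      have hne : j - k ≠ j := fun hc => hk (by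
        have := sub_eq_self.mp hc
        exact this)
      rw [show bv j (j - k) = 0 by simp [bv, hne]] at this
      exact units_ne_zero (ε (j - k)) this
    subst hk
    refine ⟨rfl, ?_⟩
    have := congrFun h j
    simp only [mperm_apply, Pi.zero_apply, add_zero, bv_self, mul_one] at this
    exact Units.val_eq_one.mp this
  · rintro ⟨rfl, hε⟩
    funext i
    by_cases hij : i = j
    · subst hij
      simp [hε]
    · simp [bv, hij]

/-! ### Transitivity -/

lemma Gd_transitive : MulAction.IsPretransitive (Gd d) (Pt d) := by
  constructor
  intro x y
  refine ⟨⟨mperm 1 0 (y - x), mperm_mem _ _ _⟩, ?_⟩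
  show mperm 1 0 (y - x) x = y
  funext i
  simp

/-! ### Primitivity -/

section Primitivity

variable [NeZero d]

lemma cast_val_eq (j : ZMod d) : ((j.val : ℕ) : ZMod d) = j :=
  ZMod.natCast_rightInverse j

lemma Gd_primitive : ∀ B : Set (Pt d), MulAction.IsBlock (Gd d) B →
    B.Subsingleton ∨ B = Set.univ := by
  intro B hB
  rcases em B.Subsingleton with hs | hs
  · exact Or.inl hs
  right
  obtain ⟨a, ha, c, hc, hac⟩ := Set.not_subsingleton_iff.mp hs
  -- translate so that the block contains 0
  set τ : (Gd d) := ⟨mperm 1 0 (-a), mperm_mem _ _ _⟩ with hτ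
  set B' : Set (Pt d) := τ • B with hB'def
  have hB' : MulAction.IsBlock (Gd d) B' := hB.translate τ
  have hτapp : ∀ x : Pt d, τ • x = x - a := by
    intro x
    show mperm 1 0 (-a) x = x - a
    funext i
    simp [sub_eq_add_neg]
  have h0 : (0 : Pt d) ∈ B' := by
    have : τ • a ∈ B' := Set.smul_mem_smul_set ha
    rwa [hτapp, sub_self] at this
  -- key principle: an element of Gd fixing 0 into B' maps B' into B'
  have key : ∀ g : (Gd d), g • (0 : Pt d) ∈ B' → ∀ x ∈ B', g • x ∈ B' := by
    intro g hg0 x hx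
    have : g • B' = B' := hB'.smul_eq_of_mem h0 hg0
    rw [← this]
    exact Set.smul_mem_smul_set hx
  -- closure under addition
  have hadd : ∀ v ∈ B', ∀ x ∈ B', x + v ∈ B' := by
    intro v hv x hx
    have h1 : (⟨mperm 1 0 v, mperm_mem _ _ _⟩ : (Gd d)) • (0 : Pt d) ∈ B' := by
      have : mperm 1 0 v 0 = v := by funext i; simp
      show mperm 1 0 v 0 ∈ B'
      rwa [this]
    have := key _ h1 x hx
    have happ : mperm 1 0 v x = x + v := by funext i; simp
    rwa [show (⟨mperm 1 0 v, mperm_mem _ _ _⟩ : (Gd d)) • x = mperm 1 0 v x from rfl,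
      happ] at this
  -- closure under coordinate sign flip
  have hflip : ∀ j : ZMod d, ∀ x ∈ B',
      (fun i => if i = j then -x i else x i) ∈ B' := by
    intro j x hx
    set εj : ZMod d → (ZMod 3)ˣ := fun i => if i = j then -1 else 1 with hεj
    have h1 : (⟨mperm εj 0 0, mperm_mem _ _ _⟩ : (Gd d)) • (0 : Pt d) ∈ B' := by
      show mperm εj 0 0 0 ∈ B'
      have : mperm εj 0 0 0 = 0 := by funext i; simp
      rwa [this]
    have := key _ h1 x hx
    have happ : mperm εj 0 0 x = fun i => if i = j then -x i else x i := by
      funext i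
      by_cases hij : i = j <;> simp [hεj, hij]
    rwa [show (⟨mperm εj 0 0, mperm_mem _ _ _⟩ : (Gd d)) • x = mperm εj 0 0 x from rfl,
      happ] at this
  -- closure under the cyclic shift
  have hshift : ∀ x ∈ B', (fun i => x (i + 1)) ∈ B' := by
    intro x hx
    have h1 : (⟨mperm 1 (1 : ZMod d) 0, mperm_mem _ _ _⟩ : (Gd d)) • (0 : Pt d) ∈ B' := by
      show mperm 1 (1 : ZMod d) 0 0 ∈ B'
      have h2 : mperm 1 (1 : ZMod d) 0 0 = 0 := by
        funext i
        show ((1 : ZMod d → (ZMod 3)ˣ) i : ZMod 3) * (0 : Pt d) (i + 1) + (0 : Pt d) i = 0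
        simp
      rwa [h2]
    have := key _ h1 x hx
    have happ : mperm 1 (1 : ZMod d) 0 x = fun i => x (i + 1) := by
      funext i
      show ((1 : ZMod d → (ZMod 3)ˣ) i : ZMod 3) * x (i + 1) + (0 : Pt d) i = x (i + 1)
      simp
    rwa [show (⟨mperm 1 (1 : ZMod d) 0, mperm_mem _ _ _⟩ : (Gd d)) • x
        = mperm 1 (1 : ZMod d) 0 x from rfl, happ] at this
  -- B' contains a nonzero vector
  have hvB : c - a ∈ B' := by
    have : τ • c ∈ B' := Set.smul_mem_smul_set hc
    rwa [hτapp] at this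
  have hvne : c - a ≠ 0 := sub_ne_zero.mpr (Ne.symm hac)
  obtain ⟨j0, hj0⟩ : ∃ j, (c - a) j ≠ 0 := by
    by_contra h
    push_neg at h
    exact hvne (funext h)
  -- B' contains a standard basis vector
  have hbvj0 : bv j0 ∈ B' := by
    set v : Pt d := c - a with hv
    have hfv : (fun i => if i = j0 then -v i else v i) ∈ B' := hflip j0 v hvB
    have hw1 : (v + fun i => if i = j0 then -v i else v i) ∈ B' := hadd _ hfv v hvB
    have hw : ((v + fun i => if i = j0 then -v i else v i) +
        fun i => if i = j0 then -v i else v i) ∈ B' := hadd _ hfv _ hw1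
    set w : Pt d := ((v + fun i => if i = j0 then -v i else v i) +
        fun i => if i = j0 then -v i else v i) with hwdef
    have hwval : w = fun i => if i = j0 then -(v j0) else 0 := by
      funext i
      simp only [hwdef, Pi.add_apply]
      by_cases hij : i = j0
      · subst hij
        rw [if_pos rfl, if_pos rfl]
        ring
      · rw [if_neg hij, if_neg hij]
        calc v i + v i + v i = 3 * v i := by ring
        _ = 0 := by rw [show (3 : ZMod 3) = 0 from by decide, zero_mul]
    have hu : -(v j0) = 1 ∨ -(v j0) = 2 := by
      have hne : -(v j0) ≠ 0 := neg_ne_zero.mpr hj0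
      revert hne
      generalize -(v j0) = u
      revert u
      decide
    rcases hu with hu | hu
    · have : w = bv j0 := by
        funext i
        rw [hwval]
        by_cases hij : i = j0 <;> simp [bv, hij, hu]
      rwa [← this]
    · have : w + w = bv j0 := by
        funext i
        rw [hwval]
        by_cases hij : i = j0 <;> simp [bv, hij, hu]
        decide
      rw [← this]
      exact hadd _ hw _ hw
  -- all basis vectors are in B'
  have hshift_bv : ∀ m : ZMod d, (fun i => bv m (i + 1)) = bv (m - 1) := by
    intro m
    funext i
    by_cases h : i + 1 = m
    · simp [bv, h, eq_sub_of_add_eq h]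
    · have h2 : i ≠ m - 1 := fun hc => h (by rw [hc]; ring)
      simp [bv, h, h2]
  have hiter : ∀ t : ℕ, bv (j0 - (t : ZMod d)) ∈ B' := by
    intro t
    induction t with
    | zero => simpa using hbvj0
    | succ n ih =>
      have := hshift _ ih
      rw [hshift_bv] at this
      have heq : j0 - (n : ZMod d) - 1 = j0 - ((n + 1 : ℕ) : ZMod d) := by
        push_cast
        ring
      rwa [heq] at this
  have hall : ∀ m : ZMod d, bv m ∈ B' := by
    intro m
    have := hiter (j0 - m).val
    rwa [cast_val_eq, sub_sub_cancel] at this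
  -- small multiples of basis vectors
  have hscal : ∀ (u : ZMod 3) (m : ZMod d), (fun i => u * bv m i) ∈ B' := by
    intro u m
    have hu : u = 0 ∨ u = 1 ∨ u = 2 := by revert u; decide
    rcases hu with hu | hu | hu
    · subst hu
      have : (fun i => (0 : ZMod 3) * bv m i) = (0 : Pt d) := by funext i; simp
      rwa [this]
    · subst hu
      have : (fun i => (1 : ZMod 3) * bv m i) = bv m := by funext i; simp
      rw [this]; exact hall m
    · subst hu
      have : (fun i => (2 : ZMod 3) * bv m i) = bv m + bv m := by
        funext i; show (2 : ZMod 3) * bv m i = bv m i + bv m i; ring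
      rw [this]; exact hadd _ (hall m) _ (hall m)
  -- every vector is in B'
  have huniv : ∀ x : Pt d, x ∈ B' := by
    have hind : ∀ (s : Finset (ZMod d)) (x : Pt d), (∀ i ∉ s, x i = 0) → x ∈ B' := by
      intro s
      induction s using Finset.induction_on with
      | empty =>
        intro x hx
        have : x = 0 := funext fun i => hx i (Finset.notMem_empty i)
        rwa [this]
      | insert m s' hmem ih =>
        intro x hx
        set y : Pt d := Function.update x m 0 with hy
        have hyB : y ∈ B' := by
          apply ih
          intro i hi
          by_cases him : i = m
          · subst him; simp [hy]
          · rw [hy, Function.update_of_ne him]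
            exact hx i (by simp [him, hi])
        have hzB : (fun i => x m * bv m i) ∈ B' := hscal (x m) m
        have : y + (fun i => x m * bv m i) = x := by
          funext i
          by_cases him : i = m
          · subst him
            simp [hy, bv]
          · show y i + x m * bv m i = x i
            rw [hy, Function.update_of_ne him]
            simp [bv, him]
        rw [← this]
        exact hadd _ hzB _ hyB
    intro x
    exact hind Finset.univ x (fun i hi => absurd (Finset.mem_univ i) hi)
  have hB'univ : B' = Set.univ := Set.eq_univ_of_forall huniv
  have : B = τ⁻¹ • B' := by
    rw [hB'def, inv_smul_smul]
  rw [this, hB'univ, Set.smul_set_univ]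

end Primitivity

/-! ### The irredundant base -/

lemma mem_ptStab {G : Type*} [Group G] {Δ : Type*} [MulAction G Δ] (H : Subgroup G)
    (l : List Δ) (g : G) :
    g ∈ ptStab H l ↔ g ∈ H ∧ ∀ δ ∈ l, g • δ = δ := by
  simp [ptStab, Subgroup.mem_inf, Subgroup.mem_iInf, MulAction.mem_stabilizer_iff]

lemma ptStab_take_le {G : Type*} [Group G] {Δ : Type*} [MulAction G Δ] (H : Subgroup G)
    (l : List Δ) (i : ℕ) : ptStab H (l.take (i + 1)) ≤ ptStab H (l.take i) := by
  intro g hg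
  rw [mem_ptStab] at hg ⊢
  refine ⟨hg.1, fun δ hδ => hg.2 δ ?_⟩
  have : l.take i = (l.take (i + 1)).take i := by
    rw [List.take_take, min_eq_left (Nat.le_succ i)]
  rw [this] at hδ
  exact List.take_subset i _ hδ

/-- The base list `(0, e₀, e₁, …, e_{d-1})`. -/
def baseList (d : ℕ) : List (Pt d) :=
  (0 : Pt d) :: List.map (fun m : ℕ => bv (m : ZMod d)) (List.range d)

lemma baseList_length : (baseList d).length = d + 1 := by
  rw [baseList, List.length_cons, List.length_map, List.length_range]

section Base

variable [NeZero d]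

lemma natCast_inj_of_lt {m m' : ℕ} (hm : m < d) (hm' : m' < d)
    (h : (m : ZMod d) = (m' : ZMod d)) : m = m' := by
  have := congrArg ZMod.val h
  rwa [ZMod.val_cast_of_lt hm, ZMod.val_cast_of_lt hm'] at this

lemma mem_take_baseList {i : ℕ} (hi : i ≤ d) (δ : Pt d) :
    δ ∈ (baseList d).take (i + 1) ↔ δ = 0 ∨ ∃ m < i, δ = bv (m : ZMod d) := by
  rw [baseList, List.take_succ_cons, ← List.map_take, List.take_range, min_eq_left hi]
  simp only [List.mem_cons, List.mem_map, List.mem_range]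
  constructor
  · rintro (h | ⟨m, hm, rfl⟩)
    · exact Or.inl h
    · exact Or.inr ⟨m, hm, rfl⟩
  · rintro (h | ⟨m, hm, rfl⟩)
    · exact Or.inl h
    · exact Or.inr ⟨m, hm, rfl⟩

lemma baseList_isIrredundantBase : IsIrredundantBase (Gd d) (baseList d) := by
  have hlen : (baseList d).length = d + 1 := baseList_length
  constructor
  · -- strict decrease at every step
    intro i hi
    rw [hlen] at hi
    rw [SetLike.lt_iff_le_and_exists]
    refine ⟨ptStab_take_le _ _ _, ?_⟩
    rcases Nat.eq_zero_or_pos i with rfl | hipos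
    · -- step 0: a translation
      refine ⟨mperm 1 0 (bv 0), ?_, ?_⟩
      · rw [show (baseList d).take 0 = [] from rfl, mem_ptStab]
        exact ⟨mperm_mem _ _ _, fun δ hδ => absurd hδ List.not_mem_nil⟩
      · rw [mem_ptStab]
        rintro ⟨-, hfix⟩
        have h0mem : (0 : Pt d) ∈ (baseList d).take 1 := by
          rw [mem_take_baseList (by omega)]
          exact Or.inl rfl
        have := hfix 0 h0mem
        have h1 := congrFun this 0
        simp [Equiv.Perm.smul_def] at h1
    · -- step m+1: a sign flip at coordinate m
      obtain ⟨m, rfl⟩ := Nat.exists_eq_add_of_lt hipos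
      rw [zero_add] at *
      have hmd : m + 1 ≤ d := by omega
      set εm : ZMod d → (ZMod 3)ˣ := fun i => if i = (m : ZMod d) then -1 else 1 with hεm
      refine ⟨mperm εm 0 0, ?_, ?_⟩
      · rw [mem_ptStab]
        refine ⟨mperm_mem _ _ _, ?_⟩
        intro δ hδ
        rw [mem_take_baseList (by omega)] at hδ
        rcases hδ with rfl | ⟨m', hm', rfl⟩
        · rw [Equiv.Perm.smul_def, fix_zero_iff]
        · rw [Equiv.Perm.smul_def, fix_bv_iff]
          refine ⟨rfl, ?_⟩
          have hne : ((m' : ℕ) : ZMod d) ≠ (m : ZMod d) := fun hc =>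
            absurd (natCast_inj_of_lt (by omega) (by omega) hc) (by omega)
          simp [hεm, hne]
      · rw [mem_ptStab]
        rintro ⟨-, hfix⟩
        have hmem : bv (m : ZMod d) ∈ (baseList d).take (m + 1 + 1) := by
          rw [mem_take_baseList hmd]
          exact Or.inr ⟨m, by omega, rfl⟩
        have := hfix _ hmem
        rw [Equiv.Perm.smul_def, fix_bv_iff] at this
        have hεm1 : εm (m : ZMod d) = 1 := this.2
        rw [hεm] at hεm1
        simp only [if_pos rfl] at hεm1
        exact absurd hεm1 (by decide)
  · -- the full stabiliser is trivial
    rw [eq_bot_iff]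
    intro π hπ
    rw [mem_ptStab] at hπ
    obtain ⟨hmem, hfix⟩ := hπ
    obtain ⟨ε, k, b, rfl⟩ := mem_Gd.mp hmem
    have hl : (baseList d).take (d + 1) = baseList d := by
      rw [← baseList_length]; exact List.take_length
    have hb : b = 0 := by
      have h0mem : (0 : Pt d) ∈ baseList d := by
        rw [← hl, mem_take_baseList (le_refl d)]
        exact Or.inl rfl
      have := hfix 0 h0mem
      rw [Equiv.Perm.smul_def, fix_zero_iff] at this
      exact this
    subst hb
    have hfixbv : ∀ m : ℕ, m < d → k = 0 ∧ ε (m : ZMod d) = 1 := by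
      intro m hm
      have hmem : bv (m : ZMod d) ∈ baseList d := by
        rw [← hl, mem_take_baseList (le_refl d)]
        exact Or.inr ⟨m, hm, rfl⟩
      have := hfix _ hmem
      rwa [Equiv.Perm.smul_def, fix_bv_iff] at this
    have hk : k = 0 := (hfixbv 0 (Nat.pos_of_ne_zero (NeZero.ne d))).1
    have hε : ε = 1 := by
      funext j
      have hjval : j.val < d := ZMod.val_lt j
      have := (hfixbv j.val hjval).2
      rwa [cast_val_eq] at this
    subst hk hε
    rw [Subgroup.mem_bot]
    exact mperm_one

end Base

/-! ### Bounding the lengths of irredundant bases -/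

lemma ptStab_strict_chain {G : Type*} [Group G] {Δ : Type*} [MulAction G Δ]
    (H : Subgroup G) (l : List Δ)
    (hl : ∀ i < l.length, ptStab H (l.take (i + 1)) < ptStab H (l.take i)) :
    ∀ i j, i < j → j ≤ l.length → ptStab H (l.take j) < ptStab H (l.take i) := by
  intro i j
  induction j with
  | zero => omega
  | succ n ih =>
    intro hij hn
    rcases Nat.lt_or_ge i n with h | h
    · exact lt_trans (hl n (by omega)) (ih h (by omega))
    · have : i = n := by omega
      subst this
      exact hl i (by omega)

lemma length_le_of_irredundant {G : Type*} [Group G] [Finite G] {Δ : Type*} [MulAction G Δ]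
    (H : Subgroup G) (l : List Δ) (hl : IsIrredundantBase H l) :
    l.length ≤ Nat.card (Subgroup G) := by
  have hchain := ptStab_strict_chain H l hl.1
  set F : Fin (l.length + 1) → Subgroup G := fun i => ptStab H (l.take i) with hF
  have hinj : Function.Injective F := by
    intro i j hij
    by_contra hne
    rcases Fin.lt_or_lt_of_ne hne with h | h
    · exact absurd hij (ne_of_gt (hchain i j h (by omega)))
    · exact absurd hij.symm (ne_of_gt (hchain j i h (by omega)))
  have := Nat.card_le_card_of_injective F hinj
  rw [Nat.card_eq_fintype_card, Fintype.card_fin] at this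
  omega

end MG

open MG in
/-- Corollary (second claim): for every `d ≥ 1` there is a primitive soluble permutation
group of degree `n = 3 ^ d` with `I(G) ≥ 0.63 log₂ n + 1`; in particular there are
infinitely many such degrees. -/
theorem exists_primitive_solvable_with_maxIrr_ge (d : ℕ) (hd : 1 ≤ d) :
    ∃ (Δ : Type) (_ : Fintype Δ) (G : Subgroup (Equiv.Perm Δ)),
      Fintype.card Δ = 3 ^ d ∧ IsSolvable G ∧ IsPrimitiveSubgroup G ∧
      0.63 * Real.logb 2 (Fintype.card Δ) + 1 ≤ (maxIrr G Δ : ℝ) := by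
  haveI : NeZero d := ⟨by omega⟩
  refine ⟨Pt d, inferInstance, Gd d, ?_, (inferInstance : Group.IsSolvable (Gd d)), ⟨Gd_transitive, Gd_primitive⟩, ?_⟩
  · rw [Fintype.card_fun, ZMod.card, ZMod.card]
  · -- numerical part
    have hcard : (Fintype.card (Pt d) : ℝ) = (3 : ℝ) ^ d := by
      rw [Fintype.card_fun, ZMod.card, ZMod.card]
      push_cast
      ring
    have hmax : d + 1 ≤ maxIrr (Gd d) (Pt d) := by
      apply le_csSup
      · -- bounded above
        refine ⟨Nat.card (Subgroup (Equiv.Perm (Pt d))), ?_⟩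
        rintro k ⟨l, hl, rfl⟩
        exact length_le_of_irredundant _ l hl
      · exact ⟨baseList d, baseList_isIrredundantBase, baseList_length⟩
    have hlogb : Real.logb 2 3 ≤ 100 / 63 := by
      have h1 : (0 : ℝ) < 3 := by norm_num
      have h63 : (63 : ℝ) * Real.logb 2 3 = Real.logb 2 (3 ^ (63 : ℕ)) := by
        rw [Real.logb_pow]
        push_cast
        ring
      have h2 : Real.logb 2 ((3 : ℝ) ^ (63 : ℕ)) ≤ Real.logb 2 ((2 : ℝ) ^ (100 : ℕ)) := by
        apply Real.logb_le_logb_of_le (by norm_num : (1:ℝ) < 2) (by positivity)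
        norm_num
      have h3 : Real.logb 2 ((2 : ℝ) ^ (100 : ℕ)) = 100 := by
        rw [Real.logb_pow, Real.logb_self_eq_one (by norm_num : (1:ℝ) < 2)]
        norm_num
      nlinarith [h63, h2, h3]
    have hlogb2 : Real.logb 2 ((Fintype.card (Pt d) : ℝ)) = d * Real.logb 2 3 := by
      rw [hcard, Real.logb_pow]
    rw [hlogb2]
    have hle : (0.63 : ℝ) * (d * Real.logb 2 3) ≤ d := by
      have hlb_nonneg : (0 : ℝ) ≤ Real.logb 2 3 :=
        Real.logb_nonneg (by norm_num) (by norm_num)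
      have : (0.63 : ℝ) * Real.logb 2 3 ≤ 1 := by nlinarith
      have hd0 : (0 : ℝ) ≤ d := Nat.cast_nonneg d
      nlinarith
    have : ((d : ℝ) + 1) ≤ (maxIrr (Gd d) (Pt d) : ℝ) := by
      have := hmax
      exact_mod_cast this
    nlinarith
end

section
/- Let G be a finite group acting faithfully on a finite set Δ, let S be a subgroup of G and let N be a normal subgroup of G. Then I(S) ≤ I(G), and I(G) ≤ I(N) + ℓ(G/N). -/
/-- `ℓ(G)`: the maximum length `l` of a strictly descending chain
`G = G_0 > G_1 > … > G_l = 1` of subgroups of `G`. -/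
noncomputable def subgroupChainLength (G : Type*) [Group G] : ℕ :=
  sSup {n | ∃ c : Fin (n + 1) → Subgroup G, StrictAnti c ∧ c 0 = ⊤ ∧ c (Fin.last n) = ⊥}

section Aux

variable {G : Type*} [Group G] {Δ : Type*} [MulAction G Δ]

lemma take_append_left' {α : Type*} :
    ∀ (l₁ l₂ : List α) (n : ℕ), n ≤ l₁.length → (l₁ ++ l₂).take n = l₁.take n
  | _, _, 0, _ => by simp
  | a :: l₁, l₂, n + 1, h => by
      simp only [List.cons_append, List.take_succ_cons]
      rw [take_append_left' l₁ l₂ n (by simpa using h)]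
  | [], _, n + 1, h => by simp at h

lemma ptStab_nil (H : Subgroup G) : ptStab H ([] : List Δ) = H := by
  simp [ptStab]

lemma ptStab_concat (H : Subgroup G) (l : List Δ) (δ : Δ) :
    ptStab H (l ++ [δ]) = ptStab H l ⊓ MulAction.stabilizer G δ := by
  simp only [ptStab, List.mem_append, List.mem_singleton, iInf_or, iInf_inf_eq,
    iInf_iInf_eq_left]
  rw [inf_assoc]

lemma ptStab_anti (H : Subgroup G) {l₁ l₂ : List Δ} (h : l₁ ⊆ l₂) :
    ptStab H l₂ ≤ ptStab H l₁ := by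
  refine inf_le_inf_left _ ?_
  exact le_iInf₂ fun δ hδ => iInf₂_le δ (h hδ)

lemma ptStab_eq_inf_top (S : Subgroup G) (l : List Δ) :
    ptStab S l = S ⊓ ptStab (⊤ : Subgroup G) l := by
  simp [ptStab, ← inf_assoc]

lemma finite_subgroup [Finite G] : Finite (Subgroup G) :=
  Finite.of_injective _ (SetLike.coe_injective (A := Subgroup G))

lemma bddAbove_irr [Finite G] (H : Subgroup G) :
    BddAbove {k | ∃ l : List Δ, IsIrredundantBase H l ∧ l.length = k} := by
  haveI := finite_subgroup (G := G)
  refine ⟨Nat.card (Subgroup G), ?_⟩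
  rintro k ⟨l, ⟨hl, -⟩, rfl⟩
  have hchain : ∀ j ≤ l.length, ∀ i < j, ptStab H (l.take j) < ptStab H (l.take i) := by
    intro j
    induction j with
    | zero => intro _ i hi; omega
    | succ j ihj =>
      intro hj i hi
      have h1 : ptStab H (l.take (j + 1)) < ptStab H (l.take j) := hl j (by omega)
      rcases Nat.lt_succ_iff_lt_or_eq.mp hi with h | h
      · exact h1.trans (ihj (by omega) i h)
      · subst h; exact h1
  have hinj : Function.Injective (fun i : Fin (l.length + 1) => ptStab H (l.take i)) := by
    intro a b hab
    rcases lt_trichotomy a b with h | h | h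
    · exact absurd hab.symm (hchain b (by omega) a h).ne
    · exact h
    · exact absurd hab (hchain a (by omega) b h).ne
  have := Nat.card_le_card_of_injective _ hinj
  simp only [Nat.card_eq_fintype_card, Fintype.card_fin] at this
  omega

lemma bddAbove_chain (Q : Type*) [Group Q] [Finite Q] :
    BddAbove {n | ∃ c : Fin (n + 1) → Subgroup Q, StrictAnti c ∧ c 0 = ⊤ ∧ c (Fin.last n) = ⊥} := by
  haveI := finite_subgroup (G := Q)
  refine ⟨Nat.card (Subgroup Q), ?_⟩
  rintro n ⟨c, hc, -, -⟩
  have := Nat.card_le_card_of_injective c hc.injective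
  simp only [Nat.card_eq_fintype_card, Fintype.card_fin] at this
  omega

/-- Any list whose prefix stabilisers strictly decrease can be extended to an
irredundant base; hence its length is at most `maxIrr`. -/
lemma length_le_maxIrr [Finite G] [Finite Δ] [FaithfulSMul G Δ] (H : Subgroup G) (l : List Δ)
    (hl : ∀ i < l.length, ptStab H (l.take (i + 1)) < ptStab H (l.take i)) :
    l.length ≤ maxIrr H Δ := by
  have key : ∀ (n : ℕ) (l : List Δ), Set.ncard (ptStab H l : Set G) = n →
      (∀ i < l.length, ptStab H (l.take (i + 1)) < ptStab H (l.take i)) →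
      l.length ≤ maxIrr H Δ := by
    intro n
    induction n using Nat.strong_induction_on with
    | _ n ih =>
      intro l hcard hl
      by_cases hbot : ptStab H l = ⊥
      · exact le_csSup (bddAbove_irr H) ⟨l, ⟨hl, hbot⟩, rfl⟩
      · obtain ⟨g, hg, hg1⟩ : ∃ g ∈ ptStab H l, g ≠ 1 := by
          by_contra hc; push_neg at hc
          refine hbot (le_antisymm (fun g hgm => ?_) bot_le)
          simpa [Subgroup.mem_bot] using hc g hgm
        obtain ⟨δ, hδ⟩ : ∃ δ : Δ, g • δ ≠ δ := by
          by_contra hc; push_neg at hc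
          exact hg1 (eq_of_smul_eq_smul (α := Δ) fun δ => by rw [hc δ, one_smul])
        have hlt : ptStab H (l ++ [δ]) < ptStab H l := by
          rw [ptStab_concat]
          refine lt_of_le_of_ne inf_le_left fun he => ?_
          have hg' : g ∈ ptStab H l ⊓ MulAction.stabilizer G δ := he.symm ▸ hg
          exact hδ hg'.2
        have hl' : ∀ i < (l ++ [δ]).length,
            ptStab H ((l ++ [δ]).take (i + 1)) < ptStab H ((l ++ [δ]).take i) := by
          intro i hi
          simp only [List.length_append, List.length_singleton] at hi
          rcases Nat.lt_succ_iff_lt_or_eq.mp hi with h | h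
          · rw [take_append_left' l [δ] (i + 1) (by omega), take_append_left' l [δ] i (by omega)]
            exact hl i h
          · subst h
            rw [List.take_of_length_le (by simp), take_append_left' l [δ] l.length le_rfl,
              List.take_length]
            exact hlt
        have hcard' : Set.ncard (ptStab H (l ++ [δ]) : Set G) < n := by
          rw [← hcard]
          exact Set.ncard_lt_ncard (SetLike.coe_ssubset_coe.mpr hlt) (Set.toFinite _)
        have := ih _ hcard' (l ++ [δ]) rfl hl'
        simp only [List.length_append, List.length_singleton] at this
        omega
  exact key _ l rfl hl

lemma dedekind_eq {A' A N : Subgroup G} [N.Normal] (hle : A' ≤ A)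
    (hinf : A' ⊓ N = A ⊓ N) (hsup : A' ⊔ N = A ⊔ N) : A' = A := by
  refine le_antisymm hle fun a ha => ?_
  have h1 : a ∈ A ⊔ N := Subgroup.mem_sup_left ha
  rw [← hsup] at h1
  have h2 : a ∈ (↑(A' ⊔ N) : Set G) := h1
  rw [Subgroup.mul_normal] at h2
  obtain ⟨x, hx, n, hn, rfl⟩ := h2
  have hxA : x ∈ A := hle hx
  have hnA : n ∈ A := by
    have := A.mul_mem (A.inv_mem hxA) ha
    simpa [inv_mul_cancel_left] using this
  have hnA' : n ∈ A' ⊓ N := hinf ▸ (⟨hnA, hn⟩ : n ∈ A ⊓ N)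
  exact A'.mul_mem hx hnA'.1

lemma strictAnti_snoc {α : Type*} [Preorder α] {m : ℕ} {c : Fin (m + 1) → α} (hc : StrictAnti c)
    {x : α} (hx : x < c (Fin.last m)) : StrictAnti (Fin.snoc c x) := by
  rw [Fin.strictAnti_iff_succ_lt]
  intro i
  refine Fin.lastCases ?_ ?_ i
  · rw [Fin.succ_last, Fin.snoc_last, Fin.snoc_castSucc]
    exact hx
  · intro j
    rw [Fin.succ_castSucc, Fin.snoc_castSucc, Fin.snoc_castSucc]
    exact hc Fin.castSucc_lt_succ

lemma key_step [Finite G] (N : Subgroup G) [N.Normal]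
    (l : List Δ) (hl : ∀ i < l.length, ptStab (⊤ : Subgroup G) (l.take (i + 1)) <
      ptStab (⊤ : Subgroup G) (l.take i)) :
    ∀ i ≤ l.length, ∃ (la : List Δ) (m : ℕ) (c : Fin (m + 1) → Subgroup (G ⧸ N)),
      (∀ j < la.length, ptStab N (la.take (j + 1)) < ptStab N (la.take j)) ∧
      ptStab (⊤ : Subgroup G) (l.take i) ⊓ N ≤ ptStab N la ∧
      StrictAnti c ∧ c 0 = ⊤ ∧
      c (Fin.last m) = (ptStab (⊤ : Subgroup G) (l.take i)).map (QuotientGroup.mk' N) ∧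
      i ≤ la.length + m := by
  intro i
  induction i with
  | zero =>
    intro _
    refine ⟨[], 0, fun _ => ⊤, ?_, ?_, ?_, rfl, ?_, by omega⟩
    · intro j hj; simp at hj
    · simp [ptStab]
    · intro a b hab; exact absurd hab (by omega)
    · rw [List.take_zero, ptStab_nil,
        Subgroup.map_top_of_surjective _ (QuotientGroup.mk'_surjective N)]
  | succ i ihi =>
    intro hi1
    obtain ⟨la, m, c, hla, hinv, hc, hc0, hclast, hlen⟩ := ihi (by omega)
    have hilt : i < l.length := by omega
    set δ := l[i]'hilt with hδdef
    have htake : l.take (i + 1) = l.take i ++ [δ] := by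
      rw [← List.take_concat_get hilt, List.concat_eq_append]
    set A := ptStab (⊤ : Subgroup G) (l.take i) with hA
    set A' := ptStab (⊤ : Subgroup G) (l.take (i + 1)) with hA'
    have hAeq : A' = A ⊓ MulAction.stabilizer G δ := by
      rw [hA', htake, ptStab_concat]
    have hlt : A' < A := hl i hilt
    have hNle : A' ⊓ N ≤ A ⊓ N := inf_le_inf_right _ hlt.le
    have hQle : A'.map (QuotientGroup.mk' N) ≤ A.map (QuotientGroup.mk' N) :=
      Subgroup.map_mono hlt.le
    by_cases hN : A' ⊓ N = A ⊓ N
    · -- the `N`-part does not drop, so the quotient part must drop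
      have hQne : A'.map (QuotientGroup.mk' N) ≠ A.map (QuotientGroup.mk' N) := by
        intro he
        apply hlt.ne
        apply dedekind_eq hlt.le hN
        have h2 := congrArg (Subgroup.comap (QuotientGroup.mk' N)) he
        rwa [Subgroup.comap_map_eq, Subgroup.comap_map_eq, QuotientGroup.ker_mk'] at h2
      refine ⟨la, m + 1, Fin.snoc c (A'.map (QuotientGroup.mk' N)), hla,
        hN.le.trans hinv, strictAnti_snoc hc ?_, ?_, ?_, by omega⟩
      · rw [hclast]; exact lt_of_le_of_ne hQle hQne
      · rw [← Fin.castSucc_zero, Fin.snoc_castSucc]; exact hc0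
      · exact Fin.snoc_last _ _
    · -- the `N`-part drops
      obtain ⟨n, hnAN, hnδ⟩ : ∃ n ∈ A ⊓ N, n ∉ MulAction.stabilizer G δ := by
        by_contra hcon; push_neg at hcon
        apply hN
        refine le_antisymm hNle fun g hg => ?_
        exact ⟨hAeq ▸ (⟨hg.1, hcon g hg⟩ : g ∈ A ⊓ MulAction.stabilizer G δ), hg.2⟩
      have hinv' : A' ⊓ N ≤ ptStab N (la ++ [δ]) := by
        rw [ptStab_concat]
        refine le_inf (hNle.trans hinv) ?_
        refine le_trans inf_le_left ?_
        rw [hAeq]; exact inf_le_right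
      have hlab : ∀ j < (la ++ [δ]).length,
          ptStab N ((la ++ [δ]).take (j + 1)) < ptStab N ((la ++ [δ]).take j) := by
        intro j hj
        simp only [List.length_append, List.length_singleton] at hj
        rcases Nat.lt_succ_iff_lt_or_eq.mp hj with h | h
        · rw [take_append_left' la [δ] (j + 1) (by omega), take_append_left' la [δ] j (by omega)]
          exact hla j h
        · subst h
          rw [List.take_of_length_le (by simp), take_append_left' la [δ] la.length le_rfl,
            List.take_length, ptStab_concat]
          refine lt_of_le_of_ne inf_le_left fun he => ?_
          have hn' : n ∈ ptStab N la ⊓ MulAction.stabilizer G δ := he.symm ▸ hinv hnAN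
          exact hnδ hn'.2
      by_cases hQ : A'.map (QuotientGroup.mk' N) = A.map (QuotientGroup.mk' N)
      · refine ⟨la ++ [δ], m, c, hlab, hinv', hc, hc0, by rw [hclast, hQ], ?_⟩
        simp only [List.length_append, List.length_singleton]; omega
      · refine ⟨la ++ [δ], m + 1, Fin.snoc c (A'.map (QuotientGroup.mk' N)), hlab, hinv',
          strictAnti_snoc hc ?_, ?_, Fin.snoc_last _ _, ?_⟩
        · rw [hclast]; exact lt_of_le_of_ne hQle hQ
        · rw [← Fin.castSucc_zero, Fin.snoc_castSucc]; exact hc0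
        · simp only [List.length_append, List.length_singleton]; omega

end Aux

/-- Lemma 2.1: for a finite group `G` acting faithfully on a finite set `Δ`, a subgroup `S`
and a normal subgroup `N`, we have `I(S) ≤ I(G)` and `I(G) ≤ I(N) + ℓ(G/N)`. -/
theorem maxIrr_subgroup_and_normal (G : Type*) [Group G] [Finite G] (Δ : Type*) [Finite Δ]
    [MulAction G Δ] [FaithfulSMul G Δ] (S N : Subgroup G) [N.Normal] :
    maxIrr S Δ ≤ maxIrr (⊤ : Subgroup G) Δ ∧
      maxIrr (⊤ : Subgroup G) Δ ≤ maxIrr N Δ + subgroupChainLength (G ⧸ N) := by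
  constructor
  · apply csSup_le'
    rintro k ⟨l, ⟨hl, -⟩, rfl⟩
    apply length_le_maxIrr
    intro i hi
    refine lt_of_le_of_ne (ptStab_anti _ ?_) fun he => (hl i hi).ne ?_
    · intro x hx
      rw [List.take_succ]
      exact List.mem_append.mpr (Or.inl hx)
    · rw [ptStab_eq_inf_top, ptStab_eq_inf_top S (l.take i), he]
  · apply csSup_le'
    rintro k ⟨l, ⟨hl, hbot⟩, rfl⟩
    obtain ⟨la, m, c, hla, -, hc, hc0, hclast, hlen⟩ := key_step N l hl l.length le_rfl
    have h1 : la.length ≤ maxIrr N Δ := length_le_maxIrr N la hla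
    have h2 : m ≤ subgroupChainLength (G ⧸ N) := by
      apply le_csSup (bddAbove_chain (G ⧸ N))
      refine ⟨c, hc, hc0, ?_⟩
      rw [hclast, List.take_length, hbot, Subgroup.map_bot]
    omega
end
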